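/- Fix γ > 1, constants m₀ > 0, B₀ > 0, r₁ > 0. Suppose ρ > 0, u > 0, p > 0, S > 0 satisfy r₁²ρu = m₀, p = Sρ^γ, and B₀ = u²/2 + γp/((γ−1)ρ), and the flow is subsonic: u² < γp/ρ. Then p, viewed as implicitly determined by S via B₀ = (1/2)(m₀/r₁²)²(S/p)^{2/γ} + (γ/(γ−1)) p^{1−1/γ} S^{1/γ}, satisfies dp/dS < 0; i.e., at a fixed radius with fixed mass flux and Bernoulli invariant, the exit pressure of a subsonic flow is strictly decreasing in the entropy. -/

import Mathlib

open Filter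

set_option maxHeartbeats 1000000 in
/-- At a fixed radius `r₁` with fixed mass flux `m₀` and Bernoulli invariant `B₀`, the
pressure of a subsonic state, viewed as implicitly determined by the entropy `S` via
`B₀ = (1/2)(m₀/r₁²)²(S/p)^{2/γ} + (γ/(γ−1)) p^{1−1/γ} S^{1/γ}`, is strictly decreasing in
`S`: `dp/dS < 0`. -/
theorem stmt_7 (γ m₀ B₀ r₁ ρ u p₀ S₀ p' : ℝ) (P : ℝ → ℝ)
    (hγ : 1 < γ) (hm₀ : 0 < m₀) (hB₀ : 0 < B₀) (hr₁ : 0 < r₁)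
    (hρ : 0 < ρ) (hu : 0 < u) (hp₀ : 0 < p₀) (hS₀ : 0 < S₀)
    (hflux : r₁^2 * ρ * u = m₀)
    (hstate : p₀ = S₀ * ρ ^ γ)
    (hbern : B₀ = u^2/2 + γ*p₀/((γ-1)*ρ))
    (hsub : u^2 < γ * p₀ / ρ)
    (hP0 : P S₀ = p₀)
    (hPrel : ∀ᶠ S in nhds S₀,
      B₀ = (1/2) * (m₀/r₁^2)^2 * (S / P S) ^ (2/γ)
            + (γ/(γ-1)) * (P S) ^ (1 - 1/γ) * S ^ (1/γ))
    (hPderiv : HasDerivAt P p' S₀) :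
    p' < 0 := by
  have hγ0 : (0:ℝ) < γ := by linarith
  have hγ1 : (0:ℝ) < γ - 1 := by linarith
  have hPS₀ : 0 < P S₀ := hP0 ▸ hp₀
  have hquot : 0 < S₀ / P S₀ := div_pos hS₀ hPS₀
  -- derivative of the right-hand side via the chain rule
  have hdiv : HasDerivAt (fun S => S / P S) ((1 * P S₀ - S₀ * p') / P S₀ ^ 2) S₀ :=
    (hasDerivAt_id S₀).div hPderiv hPS₀.ne'
  have h1 : HasDerivAt (fun S => (1/2) * (m₀/r₁^2)^2 * (S / P S) ^ (2/γ))
      ((1/2) * (m₀/r₁^2)^2 * ((1 * P S₀ - S₀ * p') / P S₀ ^ 2 * (2/γ) * (S₀ / P S₀) ^ (2/γ - 1))) S₀ :=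
    (hdiv.rpow_const (Or.inl hquot.ne')).const_mul _
  have h2 : HasDerivAt (fun S => (P S) ^ (1 - 1/γ)) (p' * (1 - 1/γ) * (P S₀) ^ (1 - 1/γ - 1)) S₀ :=
    hPderiv.rpow_const (Or.inl hPS₀.ne')
  have h3 : HasDerivAt (fun S : ℝ => S ^ (1/γ)) ((1/γ) * S₀ ^ (1/γ - 1)) S₀ :=
    Real.hasDerivAt_rpow_const (Or.inl hS₀.ne')
  have h23 : HasDerivAt (fun S => (γ/(γ-1)) * ((P S) ^ (1 - 1/γ) * S ^ (1/γ)))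
      ((γ/(γ-1)) * (p' * (1 - 1/γ) * (P S₀) ^ (1 - 1/γ - 1) * S₀ ^ (1/γ)
        + (P S₀) ^ (1 - 1/γ) * ((1/γ) * S₀ ^ (1/γ - 1)))) S₀ :=
    (h2.mul h3).const_mul _
  have hG : HasDerivAt (fun S => (1/2) * (m₀/r₁^2)^2 * (S / P S) ^ (2/γ)
      + (γ/(γ-1)) * ((P S) ^ (1 - 1/γ) * S ^ (1/γ)))
      ((1/2) * (m₀/r₁^2)^2 * ((1 * P S₀ - S₀ * p') / P S₀ ^ 2 * (2/γ) * (S₀ / P S₀) ^ (2/γ - 1))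
       + (γ/(γ-1)) * (p' * (1 - 1/γ) * (P S₀) ^ (1 - 1/γ - 1) * S₀ ^ (1/γ)
        + (P S₀) ^ (1 - 1/γ) * ((1/γ) * S₀ ^ (1/γ - 1)))) S₀ := h1.add h23
  -- but the right-hand side is eventually the constant B₀
  have hG0 : HasDerivAt (fun S => (1/2) * (m₀/r₁^2)^2 * (S / P S) ^ (2/γ)
      + (γ/(γ-1)) * ((P S) ^ (1 - 1/γ) * S ^ (1/γ))) 0 S₀ := by
    refine (hasDerivAt_const S₀ B₀).congr_of_eventuallyEq ?_
    filter_upwards [hPrel] with S hS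
    rw [hS]; ring
  have hD := hG.unique hG0
  rw [hP0] at hD
  -- algebraic simplification of the rpow expressions
  have hA : m₀ / r₁^2 = ρ * u := by
    rw [div_eq_iff (by positivity)]; linear_combination -hflux
  set a := S₀ ^ (1/γ) with ha
  set b := p₀ ^ (1/γ) with hb
  have ha0 : 0 < a := Real.rpow_pos_of_pos hS₀ _
  have hb0 : 0 < b := Real.rpow_pos_of_pos hp₀ _
  have hq1 : a / b = ρ⁻¹ := by
    rw [ha, hb, ← Real.div_rpow hS₀.le hp₀.le, hstate]
    have : S₀ / (S₀ * ρ ^ γ) = (ρ ^ γ)⁻¹ := by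
      field_simp
    rw [this, Real.inv_rpow (Real.rpow_pos_of_pos hρ γ).le, ← Real.rpow_mul hρ.le,
      mul_one_div, div_self hγ0.ne', Real.rpow_one]
  have hba : b = ρ * a := by
    rw [div_eq_iff hb0.ne'] at hq1
    rw [hq1, ← mul_assoc, mul_inv_cancel₀ hρ.ne', one_mul]
  have g1 : (S₀ / p₀) ^ (2/γ - 1) = (a/b)^2 * (p₀/S₀) := by
    rw [Real.rpow_sub (div_pos hS₀ hp₀), Real.rpow_one, Real.div_rpow hS₀.le hp₀.le]
    have h2γ : (2:ℝ)/γ = (1/γ) * 2 := by ring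
    rw [h2γ, Real.rpow_mul hS₀.le, Real.rpow_mul hp₀.le, Real.rpow_two, Real.rpow_two,
      ← ha, ← hb]
    field_simp
  have g2 : p₀ ^ (1 - 1/γ - 1) = b⁻¹ := by
    have : (1 - 1/γ - 1 : ℝ) = -(1/γ) := by ring
    rw [this, Real.rpow_neg hp₀.le, hb]
  have g3 : p₀ ^ (1 - 1/γ) = p₀ / b := by
    rw [Real.rpow_sub hp₀, Real.rpow_one, hb]
  have g4 : S₀ ^ (1/γ - 1) = a / S₀ := by
    rw [Real.rpow_sub hS₀, Real.rpow_one, ha]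
  rw [hA, g1, g2, g3, g4, hba] at hD
  have hsub' : ρ * u^2 < γ * p₀ := by
    rw [lt_div_iff₀ hρ] at hsub; nlinarith [hsub]
  field_simp at hD
  have key : (γ-1)*ρ*u^2*(p₀ - S₀*p') + γ*p₀*((γ-1)*S₀*p' + p₀) = 0 := by
    have hcomm : (2*γ^2*ρ^3*a^4*S₀*p₀) ≠ 0 := by positivity
    apply mul_left_cancel₀ hcomm
    rw [mul_zero]
    linear_combination (2*γ^2*ρ^3*a^4*S₀*p₀) * hD
  nlinarith [key, hsub', mul_pos (mul_pos hS₀ hγ1) (sub_pos.2 hsub'),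
    mul_pos hγ1 (mul_pos (mul_pos hρ (mul_pos hu hu)) hp₀), mul_pos hγ0 (mul_pos hp₀ hp₀)]
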